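/- In a (d̄, t̄)-CDA A, if the set 𝒯 of faulty interactions has size at most d, all members of 𝒯 have strength at most t, and a valid interaction T of strength at most t satisfies: 𝒯 does not mask T and 𝒯 contains neither proper subsets nor proper supersets of T, then T ∈ 𝒯 ⇔ ρ_A(T) ⊆ ρ_A(𝒯), even if 𝒯 itself is not independent. -/

import Mathlib

namespace CDA

variable {k : ℕ} {V : Fin k → Type}

/-- A test case covers an interaction `T` (a partial assignment) iff it agrees
with `T` on all parameters where `T` is defined. -/
def Covers (T : ∀ i : Fin k, Option (V i)) (σ : ∀ i : Fin k, V i) : Prop :=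
  ∀ (i : Fin k) (v : V i), T i = some v → σ i = v

/-- Interaction `T₁` is a sub-interaction of `T₂`. -/
def Sub (T₁ T₂ : ∀ i : Fin k, Option (V i)) : Prop :=
  ∀ (i : Fin k) (v : V i), T₁ i = some v → T₂ i = some v

/-- The strength of an interaction: the number of parameters it assigns. -/
def strength (T : ∀ i : Fin k, Option (V i)) : ℕ :=
  (Finset.univ.filter (fun i => (T i).isSome)).card

/-- ρ_A(T): the set of rows of the array `A` covering the interaction `T`. -/
def rho (A : Set (∀ i : Fin k, V i)) (T : ∀ i : Fin k, Option (V i)) :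
    Set (∀ i : Fin k, V i) :=
  {σ ∈ A | Covers T σ}

/-- ρ_A(𝒯): the set of rows of `A` covering at least one interaction in `𝒯`. -/
def rhoS (A : Set (∀ i : Fin k, V i)) (𝒯 : Set (∀ i : Fin k, Option (V i))) :
    Set (∀ i : Fin k, V i) :=
  {σ ∈ A | ∃ T ∈ 𝒯, Covers T σ}

/-- An interaction is valid (w.r.t. the set `R` of valid test cases)
iff some valid test case covers it. -/
def ValidInt (R : Set (∀ i : Fin k, V i)) (T : ∀ i : Fin k, Option (V i)) : Prop :=
  ∃ σ ∈ R, Covers T σ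

/-- `𝒯` masks `T`: `T ∉ 𝒯` and every valid test case covering `T`
covers some member of `𝒯`. -/
def Masks (R : Set (∀ i : Fin k, V i)) (𝒯 : Set (∀ i : Fin k, Option (V i)))
    (T : ∀ i : Fin k, Option (V i)) : Prop :=
  T ∉ 𝒯 ∧ ∀ σ ∈ R, Covers T σ → ∃ T' ∈ 𝒯, Covers T' σ

/-- The set of valid interactions of strength exactly `t`. -/
def VI (R : Set (∀ i : Fin k, V i)) (t : ℕ) : Set (∀ i : Fin k, Option (V i)) :=
  {T | ValidInt R T ∧ strength T = t}

/-- The set of valid interactions of strength at most `t`. -/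
def VIbar (R : Set (∀ i : Fin k, V i)) (t : ℕ) : Set (∀ i : Fin k, Option (V i)) :=
  {T | ValidInt R T ∧ strength T ≤ t}

/-- A set of interactions is independent iff no member is a proper subset of another. -/
def Indep (𝒮 : Set (∀ i : Fin k, Option (V i))) : Prop :=
  ∀ T₁ ∈ 𝒮, ∀ T₂ ∈ 𝒮, T₁ ≠ T₂ → ¬ Sub T₁ T₂

/-- `(d,t)`-CDA condition. -/
def IsCDA (R A : Set (∀ i : Fin k, V i)) (d t : ℕ) : Prop :=
  ∀ 𝒯 ⊆ VI R t, 𝒯.Finite → 𝒯.ncard = d →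
    ∀ T ∈ VI R t, ¬ Masks R 𝒯 T → (T ∈ 𝒯 ↔ rho A T ⊆ rhoS A 𝒯)

/-- `(d̄,t)`-CDA condition. -/
def IsCDAdbar (R A : Set (∀ i : Fin k, V i)) (d t : ℕ) : Prop :=
  ∀ 𝒯 ⊆ VI R t, 𝒯.Finite → 𝒯.ncard ≤ d →
    ∀ T ∈ VI R t, ¬ Masks R 𝒯 T → (T ∈ 𝒯 ↔ rho A T ⊆ rhoS A 𝒯)

/-- `(d,t̄)`-CDA condition. -/
def IsCDAtbar (R A : Set (∀ i : Fin k, V i)) (d t : ℕ) : Prop :=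
  ∀ 𝒯 ⊆ VIbar R t, 𝒯.Finite → 𝒯.ncard = d →
    ∀ T ∈ VIbar R t, Indep (𝒯 ∪ {T}) → ¬ Masks R 𝒯 T →
      (T ∈ 𝒯 ↔ rho A T ⊆ rhoS A 𝒯)

/-- `(d̄,t̄)`-CDA condition. -/
def IsCDAdbartbar (R A : Set (∀ i : Fin k, V i)) (d t : ℕ) : Prop :=
  ∀ 𝒯 ⊆ VIbar R t, 𝒯.Finite → 𝒯.ncard ≤ d →
    ∀ T ∈ VIbar R t, Indep (𝒯 ∪ {T}) → ¬ Masks R 𝒯 T →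
      (T ∈ 𝒯 ↔ rho A T ⊆ rhoS A 𝒯)

lemma covers_of_sub {T₁ T₂ : ∀ i : Fin k, Option (V i)} {σ : ∀ i : Fin k, V i}
    (hs : Sub T₁ T₂) (hc : Covers T₂ σ) : Covers T₁ σ :=
  fun i v hv => hc i v (hs i v hv)

lemma strength_le_of_sub {T₁ T₂ : ∀ i : Fin k, Option (V i)} (hs : Sub T₁ T₂) :
    strength T₁ ≤ strength T₂ := by
  apply Finset.card_le_card
  intro i hi
  simp only [Finset.mem_filter, Finset.mem_univ, true_and, Option.isSome_iff_exists] at *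
  obtain ⟨v, hv⟩ := hi
  exact ⟨v, hs i v hv⟩

lemma eq_of_sub_of_strength_eq {T₁ T₂ : ∀ i : Fin k, Option (V i)} (hs : Sub T₁ T₂)
    (he : strength T₁ = strength T₂) : T₁ = T₂ := by
  have hsub : (Finset.univ.filter (fun i => (T₁ i).isSome)) ⊆
      (Finset.univ.filter (fun i => (T₂ i).isSome)) := by
    intro i hi
    simp only [Finset.mem_filter, Finset.mem_univ, true_and, Option.isSome_iff_exists] at *
    obtain ⟨v, hv⟩ := hi
    exact ⟨v, hs i v hv⟩
  have heq := Finset.eq_of_subset_of_card_le hsub (le_of_eq he.symm)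
  funext i
  cases h1 : T₁ i with
  | some v => exact (hs i v h1).symm
  | none =>
    cases h2 : T₂ i with
    | none => rfl
    | some w =>
      have : i ∈ Finset.univ.filter (fun i => (T₁ i).isSome) := by
        rw [heq]; simp [h2]
      simp [h1] at this

/-- in a `(d̄,t̄)`-CDA, if `𝒯` does not mask `T` and contains
neither proper subsets nor proper supersets of `T`, then
`T ∈ 𝒯 ↔ ρ_A(T) ⊆ ρ_A(𝒯)`, even if `𝒯` itself is not independent. -/
theorem cdaDbarTbar_identification (R A : Set (∀ i : Fin k, V i)) (hA : A ⊆ R)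
    (d t : ℕ) (h : IsCDAdbartbar R A d t)
    (𝒯 : Set (∀ i : Fin k, Option (V i))) (h𝒯 : 𝒯 ⊆ VIbar R t)
    (hfin : 𝒯.Finite) (hcard : 𝒯.ncard ≤ d)
    (T : ∀ i : Fin k, Option (V i)) (hT : T ∈ VIbar R t)
    (hm : ¬ Masks R 𝒯 T)
    (hnosub : ∀ T' ∈ 𝒯, ¬ (Sub T' T ∧ T' ≠ T) ∧ ¬ (Sub T T' ∧ T ≠ T')) :
    T ∈ 𝒯 ↔ rho A T ⊆ rhoS A 𝒯 := by
  classical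
  -- the set of minimal elements of 𝒯 under Sub
  set M : Set (∀ i : Fin k, Option (V i)) :=
    {T' ∈ 𝒯 | ∀ T'' ∈ 𝒯, Sub T'' T' → T'' = T'} with hM
  have hMsub : M ⊆ 𝒯 := fun x hx => hx.1
  -- each element of 𝒯 has a minimal sub-element
  have hexists : ∀ T' ∈ 𝒯, ∃ m ∈ M, Sub m T' := by
    intro T' hT'
    set S : Set (∀ i : Fin k, Option (V i)) := {x ∈ 𝒯 | Sub x T'} with hS
    have hSfin : S.Finite := hfin.subset (fun x hx => hx.1)
    have hSne : S.Nonempty := ⟨T', hT', fun i v hv => hv⟩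
    obtain ⟨a, haS, hamin⟩ := hSfin.exists_minimalFor strength S hSne
    refine ⟨a, ⟨haS.1, ?_⟩, haS.2⟩
    intro T'' hT'' hsub
    have hT''S : T'' ∈ S := ⟨hT'', fun i v hv => haS.2 i v (hsub i v hv)⟩
    have hle := strength_le_of_sub hsub
    exact eq_of_sub_of_strength_eq hsub (le_antisymm hle (hamin hT''S hle))
  -- rhoS agrees on M and 𝒯
  have hrho : rhoS A M = rhoS A 𝒯 := by
    ext σ
    constructor
    · rintro ⟨hσA, T', hT', hc⟩
      exact ⟨hσA, T', hMsub hT', hc⟩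
    · rintro ⟨hσA, T', hT', hc⟩
      obtain ⟨m, hm, hsub⟩ := hexists T' hT'
      exact ⟨hσA, m, hm, covers_of_sub hsub hc⟩
  -- membership agrees
  have hmem : T ∈ 𝒯 ↔ T ∈ M := by
    constructor
    · intro hTT
      refine ⟨hTT, fun T'' hT'' hsub => ?_⟩
      by_contra hne
      exact ((hnosub T'' hT'').1 ⟨hsub, hne⟩)
    · exact fun h => h.1
  -- apply CDA to M
  have hMVI : M ⊆ VIbar R t := fun x hx => h𝒯 (hMsub hx)
  have hMfin : M.Finite := hfin.subset hMsub
  have hMcard : M.ncard ≤ d := le_trans (Set.ncard_le_ncard hMsub hfin) hcard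
  have hindep : Indep (M ∪ {T}) := by
    rintro T₁ hT₁ T₂ hT₂ hne hsub
    rcases hT₁ with hT₁ | hT₁
    · rcases hT₂ with hT₂ | hT₂
      · exact hne (hT₂.2 T₁ (hMsub hT₁) hsub)
      · rcases hT₂ with rfl
        exact (hnosub T₁ (hMsub hT₁)).1 ⟨hsub, hne⟩
    · rcases hT₁ with rfl
      rcases hT₂ with hT₂ | hT₂
      · exact (hnosub T₂ (hMsub hT₂)).2 ⟨hsub, hne⟩
      · exact hne hT₂.symm
  have hnm : ¬ Masks R M T := by
    intro hmask
    apply hm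
    refine ⟨fun hTT => hmask.1 (hmem.mp hTT), fun σ hσ hc => ?_⟩
    obtain ⟨T', hT', hc'⟩ := hmask.2 σ hσ hc
    exact ⟨T', hMsub hT', hc'⟩
  have := h M hMVI hMfin hMcard T hT hindep hnm
  rw [hmem, this, hrho]

end CDA
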